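/- Dual certificate lemma for ℓ1 minimization: Let A ∈ R^{n×N}, a ∈ R^n, and let T be a subset of column indices of A. Suppose there exists c ∈ R^N with a = Ac whose support S is contained in T, and a vector v ∈ R^n satisfying (i) A_Sᵀ v = sign(c_S), (ii) ‖A_{T∩S^c}ᵀ v‖_∞ ≤ 1, and (iii) ‖A_{T^c}ᵀ v‖_∞ < 1. Then every minimizer c* of min ‖x‖_1 subject to a = Ax satisfies c*_j = 0 for all j ∉ T. -/
import Mathlib


/-- Dual certificate lemma for ℓ1 minimization: if `a = A c` with support of `c`
contained in `T`, and there is a dual certificate `v`, then every ℓ1-minimizer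
`c*` of `min ‖x‖₁ s.t. a = A x` vanishes outside `T`. -/
theorem stmt3 {n N : ℕ} (A : Matrix (Fin n) (Fin N) ℝ) (a : Fin n → ℝ)
    (T : Set (Fin N)) (c : Fin N → ℝ) (hc : A.mulVec c = a)
    (hsupp : ∀ j, c j ≠ 0 → j ∈ T)
    (v : Fin n → ℝ)
    (h1 : ∀ j, c j ≠ 0 → ∑ i, A i j * v i = Real.sign (c j))
    (h2 : ∀ j ∈ T, c j = 0 → |∑ i, A i j * v i| ≤ 1)
    (h3 : ∀ j ∉ T, |∑ i, A i j * v i| < 1)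
    (cstar : Fin N → ℝ) (hfeas : A.mulVec cstar = a)
    (hopt : ∀ x : Fin N → ℝ, A.mulVec x = a → ∑ j, |cstar j| ≤ ∑ j, |x j|) :
    ∀ j ∉ T, cstar j = 0 := by
  set g : Fin N → ℝ := fun j => ∑ i, A i j * v i with hg
  -- key: ∑ j, g j * x j = ∑ i, v i * (A.mulVec x) i
  have key : ∀ x : Fin N → ℝ, ∑ j, g j * x j = ∑ i, v i * A.mulVec x i := by
    intro x
    simp only [hg, Matrix.mulVec, dotProduct, Finset.sum_mul, Finset.mul_sum]
    rw [Finset.sum_comm]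
    congr 1; ext i; congr 1; ext j; ring
  have hzero : ∑ j, g j * (cstar j - c j) = 0 := by
    have := key (cstar - c)
    simp only [Pi.sub_apply] at this
    rw [this]
    have : A.mulVec (cstar - c) = 0 := by
      rw [Matrix.mulVec_sub, hfeas, hc, sub_self]
    simp [this]
  -- bound on |g j| when c j = 0
  have hgle : ∀ j, c j = 0 → |g j| ≤ 1 := by
    intro j hcj
    by_cases hT : j ∈ T
    · exact h2 j hT hcj
    · exact le_of_lt (h3 j hT)
  -- per-term inequality
  have hterm : ∀ j, 0 ≤ |cstar j| - |c j| - g j * (cstar j - c j) := by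
    intro j
    by_cases hcj : c j = 0
    · have h1' : g j * cstar j ≤ |g j| * |cstar j| := by
        calc g j * cstar j ≤ |g j * cstar j| := le_abs_self _
        _ = |g j| * |cstar j| := abs_mul _ _
      have h2' := hgle j hcj
      have h3' := abs_nonneg (cstar j)
      rw [hcj]
      simp only [abs_zero, sub_zero]
      nlinarith
    · have hgj : g j = Real.sign (c j) := h1 j hcj
      rcases lt_trichotomy (c j) 0 with hlt | heq | hgt
      · rw [hgj, Real.sign_of_neg hlt, abs_of_neg hlt]
        have := neg_abs_le (cstar j)
        nlinarith
      · exact absurd heq hcj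
      · rw [hgj, Real.sign_of_pos hgt, abs_of_pos hgt]
        have := le_abs_self (cstar j)
        nlinarith
  -- sum of slacks is ≤ 0, hence each term is 0
  have hsum : ∑ j, (|cstar j| - |c j| - g j * (cstar j - c j)) ≤ 0 := by
    have hle := hopt c hc
    rw [Finset.sum_sub_distrib, Finset.sum_sub_distrib, hzero, sub_zero]
    linarith
  have hall : ∀ j, |cstar j| - |c j| - g j * (cstar j - c j) = 0 := by
    intro j
    have := (Finset.sum_eq_zero_iff_of_nonneg (fun j _ => hterm j)).mp
      (le_antisymm hsum (Finset.sum_nonneg (fun j _ => hterm j)))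
    exact this j (Finset.mem_univ j)
  intro j hjT
  have hcj : c j = 0 := by
    by_contra h
    exact hjT (hsupp j h)
  have hj := hall j
  rw [hcj] at hj
  simp only [abs_zero, sub_zero] at hj
  by_contra hne
  have habs : 0 < |cstar j| := abs_pos.mpr hne
  have h1' : g j * cstar j ≤ |g j| * |cstar j| := by
    calc g j * cstar j ≤ |g j * cstar j| := le_abs_self _
    _ = |g j| * |cstar j| := abs_mul _ _
  have h2' := h3 j hjT
  nlinarith
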